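/- (Chain-type X operators commute with punctured Z-stabilizers.) Let x ∈ F₂^V satisfy 1_{Tᶜ}·H·x = 0 (where Tᶜ is the complement of T in C, i.e. H·x is supported on T) and let y ∈ F₂^V be supported on S. Then (x ⊗ y | 0)·(H_Z + H_Z')ᵗ = 0. Likewise, let x' ∈ F₂^C satisfy 1_{Sᶜ}·Hᵗ·x' = 0 (where Sᶜ is the complement of S in V) and let y' ∈ F₂^C be supported on T. Then (0 | y' ⊗ x')·(H_Z + H_Z')ᵗ = 0. -/

import Mathlib

open Matrix Kronecker

variable {V C : Type*} [Fintype V] [Fintype C] [DecidableEq V] [DecidableEq C]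

/-- X-stabilizer matrix `H_X = (1_V ⊗ H | Hᵗ ⊗ 1_C)` of the hypergraph product of `H`
with itself. Rows are indexed by `V × C`, column blocks by `V × V` and `C × C`. -/
def HX (H : Matrix C V (ZMod 2)) : Matrix (V × C) ((V × V) ⊕ (C × C)) (ZMod 2) :=
  Matrix.fromCols ((1 : Matrix V V (ZMod 2)) ⊗ₖ H) (Hᵀ ⊗ₖ (1 : Matrix C C (ZMod 2)))

/-- Z-stabilizer matrix `H_Z = (H ⊗ 1_V | 1_C ⊗ Hᵗ)`. Rows are indexed by `C × V`. -/
def HZ (H : Matrix C V (ZMod 2)) : Matrix (C × V) ((V × V) ⊕ (C × C)) (ZMod 2) :=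
  Matrix.fromCols (H ⊗ₖ (1 : Matrix V V (ZMod 2))) ((1 : Matrix C C (ZMod 2)) ⊗ₖ Hᵀ)

/-- Diagonal 0–1 projector matrix `1_P` onto a subset `P`. -/
def projM {α : Type*} [Fintype α] [DecidableEq α] (P : Finset α) : Matrix α α (ZMod 2) :=
  Matrix.diagonal fun a => if a ∈ P then 1 else 0

/-- Neighborhood `N = {c ∈ C : ∃ v ∈ S, H c v = 1}` of a set `S` of variable nodes. -/
def Nbhd (H : Matrix C V (ZMod 2)) (S : Finset V) : Finset C :=
  @Finset.filter C (fun c => ∃ v ∈ S, H c v = 1) (fun _ => inferInstance) Finset.univ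

/-- Ancestor `A = {c ∈ C : ∀ v, H c v = 1 → v ∈ S}` of a set `S` of variable nodes. -/
def Anc (H : Matrix C V (ZMod 2)) (S : Finset V) : Finset C :=
  @Finset.filter C (fun c => ∀ v, H c v = 1 → v ∈ S) (fun _ => inferInstance) Finset.univ

/-- Neighborhood `M = {v ∈ V : ∃ c ∈ T, H c v = 1}` of a set `T` of check nodes. -/
def NbhdT (H : Matrix C V (ZMod 2)) (T : Finset C) : Finset V :=
  Finset.univ.filter fun v => ∃ c ∈ T, H c v = 1

/-- Ancestor `B = {v ∈ V : ∀ c, H c v = 1 → c ∈ T}` of a set `T` of check nodes. -/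
def AncT (H : Matrix C V (ZMod 2)) (T : Finset C) : Finset V :=
  Finset.univ.filter fun v => ∀ c, H c v = 1 → c ∈ T

/-- Smooth-puncture X matrix `H_X' = (1_B ⊗ H_S | H_Tᵗ ⊗ 1_A)`,
where `H_S = H·1_S` and `H_T = 1_T·H`. -/
def HX' (H : Matrix C V (ZMod 2)) (S : Finset V) (T : Finset C) :
    Matrix (V × C) ((V × V) ⊕ (C × C)) (ZMod 2) :=
  Matrix.fromCols (projM (AncT H T) ⊗ₖ (H * projM S)) ((projM T * H)ᵀ ⊗ₖ projM (Anc H S))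

/-- Smooth-puncture Z matrix `H_Z' = (H_T ⊗ 1_S | 1_T ⊗ H_Sᵗ)`. -/
def HZ' (H : Matrix C V (ZMod 2)) (S : Finset V) (T : Finset C) :
    Matrix (C × V) ((V × V) ⊕ (C × C)) (ZMod 2) :=
  Matrix.fromCols ((projM T * H) ⊗ₖ projM S) (projM T ⊗ₖ (H * projM S)ᵀ)

/-- Chain-type X operators commute with the punctured Z-stabilizers. -/
theorem stmt_17 (H : Matrix C V (ZMod 2)) (S : Finset V) (T : Finset C) :
    (∀ x y : V → ZMod 2, (projM Tᶜ * H).mulVec x = 0 → (∀ v ∉ S, y v = 0) →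
      Matrix.vecMul
        (Sum.elim (fun p : V × V => x p.1 * y p.2) (fun _ : C × C => 0))
        (HZ H + HZ' H S T)ᵀ = 0) ∧
    (∀ x' y' : C → ZMod 2, (projM Sᶜ * Hᵀ).mulVec x' = 0 → (∀ c ∉ T, y' c = 0) →
      Matrix.vecMul
        (Sum.elim (fun _ : V × V => 0) (fun p : C × C => y' p.1 * x' p.2))
        (HZ H + HZ' H S T)ᵀ = 0) := by
  constructor
  · intro x y hx hy
    funext p
    obtain ⟨c, v⟩ := p
    have hc : ∀ c ∉ T, ∑ j : V, H c j * x j = 0 := by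
      intro c hcT
      have := congrFun hx c
      rw [← Matrix.mulVec_mulVec] at this
      simpa [Matrix.mulVec, dotProduct, projM, Matrix.diagonal_apply, ite_mul, zero_mul,
        one_mul, Finset.sum_ite_eq, hcT] using this
    simp only [Matrix.vecMul, Matrix.transpose_apply, Pi.zero_apply, dotProduct,
      Fintype.sum_sum_type, Sum.elim_inl, Sum.elim_inr, Matrix.add_apply,
      HZ, HZ', Matrix.fromCols_apply_inl, Matrix.fromCols_apply_inr,
      Matrix.kroneckerMap_apply, mul_zero, Finset.sum_const_zero, add_zero,
      Matrix.one_apply, Matrix.mul_apply, projM, Matrix.diagonal_apply,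
      Fintype.sum_prod_type]
    simp only [zero_mul, Finset.sum_const_zero, add_zero, mul_ite, ite_mul, mul_zero,
      mul_one, one_mul, Finset.sum_ite_eq, Finset.sum_ite_eq', Finset.mem_univ, if_true]
    simp only [mul_add, mul_ite, mul_zero, Finset.sum_ite_eq, Finset.mem_univ, if_true,
      Finset.sum_add_distrib]
    by_cases hvS : v ∈ S
    · by_cases hcT : c ∈ T
      · simp only [hvS, hcT, if_true, ← Finset.sum_add_distrib, CharTwo.add_self_eq_zero,
          Finset.sum_const_zero]
      · simp only [hvS, hcT, if_true, if_false, Finset.sum_const_zero, add_zero]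
        have h2 : ∑ x_1, x x_1 * y v * H c x_1 = y v * ∑ j, H c j * x j := by
          rw [Finset.mul_sum]; exact Finset.sum_congr rfl fun i _ => by ring
        rw [h2, hc c hcT, mul_zero]
    · simp [hy v hvS]
  · intro x' y' hx hy
    funext p
    obtain ⟨c, v⟩ := p
    have hv : ∀ v ∉ S, ∑ j : C, H j v * x' j = 0 := by
      intro v hvS
      have := congrFun hx v
      rw [← Matrix.mulVec_mulVec] at this
      simpa [Matrix.mulVec, dotProduct, projM, Matrix.diagonal_apply, Matrix.transpose_apply,
        ite_mul, zero_mul, one_mul, Finset.sum_ite_eq, hvS] using this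
    simp only [Matrix.vecMul, Matrix.transpose_apply, Pi.zero_apply, dotProduct,
      Fintype.sum_sum_type, Sum.elim_inl, Sum.elim_inr, Matrix.add_apply,
      HZ, HZ', Matrix.fromCols_apply_inl, Matrix.fromCols_apply_inr,
      Matrix.kroneckerMap_apply, mul_zero, Finset.sum_const_zero, add_zero,
      Matrix.one_apply, Matrix.mul_apply, projM, Matrix.diagonal_apply,
      Fintype.sum_prod_type]
    simp only [zero_mul, Finset.sum_const_zero, zero_add, mul_ite, ite_mul, mul_zero,
      mul_one, one_mul, Finset.sum_ite_eq, Finset.sum_ite_eq', Finset.mem_univ, if_true]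
    simp only [mul_add, mul_ite, mul_zero, Finset.sum_ite_eq, Finset.sum_ite_eq',
      Finset.mem_univ, if_true, Finset.sum_add_distrib]
    simp only [Finset.sum_ite_irrel, Finset.sum_const_zero, Finset.sum_ite_eq,
      Finset.mem_univ, if_true]
    by_cases hcT : c ∈ T
    · by_cases hvS : v ∈ S
      · simp [hvS, hcT, CharTwo.add_self_eq_zero]
      · simp only [hvS, hcT, if_false, add_zero]
        have h2 : ∑ j, y' c * x' j * H j v = y' c * ∑ j, H j v * x' j := by
          rw [Finset.mul_sum]; exact Finset.sum_congr rfl fun i _ => by ring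
        rw [h2, hv v hvS, mul_zero]
    · simp [hy c hcT]
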